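/- Let ψ: M^n → ℝ^d be an isometric immersion with induced metric g, let G_{(q)} be the q-th Lovelock tensor of g (assumed divergence-free), and let Y = ψ*Z̄^⊤ be the tangential part of the ambient position field. Then div_g(ι_Y G_{(q)}) = −((2q)!/2)[(n−2q) S_{(2q)} + (2q+1)⟨S_{(2q+1)}, Z̄⟩]. -/

import Mathlib

open scoped BigOperators RealInnerProductSpace

/-- Generalized Kronecker delta `δ^{a_1…a_k}_{b_1…b_k}`. -/
noncomputable def gkd {n k : ℕ} (a b : Fin k → Fin n) : ℝ :=
  Matrix.det (Matrix.of fun i j => if a i = b j then (1 : ℝ) else 0)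

/-- First member of the `s`-th index pair. -/
def pr1 {q : ℕ} (s : Fin q) : Fin (2 * q) := ⟨2 * s.1, by have := s.2; omega⟩

/-- Second member of the `s`-th index pair. -/
def pr2 {q : ℕ} (s : Fin q) : Fin (2 * q) := ⟨2 * s.1 + 1, by have := s.2; omega⟩

/-! ### Auxiliary lemmas -/

lemma pr1_ne_pr2 {q : ℕ} (s t : Fin q) : pr1 s ≠ pr2 t := by
  simp only [pr1, pr2, Fin.ext_iff, ne_eq]; omega

lemma pr1_inj {q : ℕ} {s t : Fin q} (h : pr1 s = pr1 t) : s = t := by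
  simp only [pr1, Fin.ext_iff] at h ⊢; omega

lemma pr2_inj {q : ℕ} {s t : Fin q} (h : pr2 s = pr2 t) : s = t := by
  simp only [pr2, Fin.ext_iff] at h ⊢; omega

open Equiv Matrix in
lemma gkd_eq_sum {n k : ℕ} (u v : Fin k → Fin n) :
    gkd u v = ∑ σ : Perm (Fin k), ((Perm.sign σ : ℤ) : ℝ) *
      ∏ s, (if u (σ s) = v s then (1:ℝ) else 0) := by
  rw [gkd, Matrix.det_apply']; rfl

lemma gkd_comm {n k : ℕ} (u v : Fin k → Fin n) : gkd u v = gkd v u := by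
  rw [gkd, gkd, ← Matrix.det_transpose]
  congr 1
  ext i j
  simp [Matrix.transpose_apply, eq_comm]

open Equiv in
lemma gkd_comp {n k : ℕ} (u v : Fin k → Fin n) (σ : Perm (Fin k)) :
    gkd (u ∘ σ) (v ∘ σ) = gkd u v := by
  have := Matrix.det_submatrix_equiv_self σ (Matrix.of fun i j => if u i = v j then (1:ℝ) else 0)
  simpa [Matrix.submatrix, gkd] using this

open Equiv in
lemma gkd_swap_right {n k : ℕ} (u v : Fin k → Fin n) (p r : Fin k) (hpr : p ≠ r) :
    gkd u (v ∘ ⇑(Equiv.swap p r)) = - gkd u v := by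
  have := Matrix.det_permute' (Equiv.swap p r)
    (Matrix.of fun i j => if u i = v j then (1:ℝ) else 0)
  simp only [Equiv.Perm.sign_swap hpr] at this
  simpa [Matrix.submatrix, gkd] using this
open Equiv Equiv.Perm in
lemma gkd_trace {n k : ℕ} (b a : Fin k → Fin n) :
    ∑ i : Fin n, gkd (Fin.cons i b) (Fin.cons i a) = ((n : ℝ) - k) * gkd b a := by
  have key : ∀ (p : Fin (k+1)) (e : Perm (Fin k)),
      (∑ i : Fin n, ∏ s : Fin (k+1),
        (if (Fin.cons i b : Fin (k+1) → Fin n) (Equiv.Perm.decomposeFin.symm (p, e) s)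
            = (Fin.cons i a : Fin (k+1) → Fin n) s then (1:ℝ) else 0))
      = (if p = 0 then (n : ℝ) else 1) * ∏ t, (if b (e t) = a t then (1:ℝ) else 0) := by
    intro p e
    rcases eq_or_ne p 0 with rfl | hp
    · have hprod : ∀ i : Fin n, ∏ s : Fin (k+1),
          (if (Fin.cons i b : Fin (k+1) → Fin n) (Equiv.Perm.decomposeFin.symm ((0 : Fin (k+1)), e) s)
              = (Fin.cons i a : Fin (k+1) → Fin n) s then (1:ℝ) else 0)
          = ∏ t, (if b (e t) = a t then (1:ℝ) else 0) := by
        intro i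
        rw [Fin.prod_univ_succ]
        simp [Equiv.Perm.decomposeFin_symm_apply_zero, Equiv.Perm.decomposeFin_symm_apply_succ]
      simp only [hprod, Finset.sum_const, Finset.card_univ, Fintype.card_fin, nsmul_eq_mul,
        if_pos rfl, if_true]
    · obtain ⟨t₀, rfl⟩ := Fin.eq_succ_of_ne_zero hp
      rw [if_neg hp, one_mul]
      set t₁ := e.symm t₀ with ht₁
      have het₁ : e t₁ = t₀ := e.apply_symm_apply t₀
      have hprod : ∀ i : Fin n, ∏ s : Fin (k+1),
          (if (Fin.cons i b : Fin (k+1) → Fin n) (Equiv.Perm.decomposeFin.symm (t₀.succ, e) s)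
              = (Fin.cons i a : Fin (k+1) → Fin n) s then (1:ℝ) else 0)
          = (if b t₀ = i then (1:ℝ) else 0) * (if i = a t₁ then (1:ℝ) else 0) *
              ∏ t ∈ Finset.univ.erase t₁, (if b (e t) = a t then (1:ℝ) else 0) := by
        intro i
        rw [Fin.prod_univ_succ]
        have h0 : (if (Fin.cons i b : Fin (k+1) → Fin n)
            (Equiv.Perm.decomposeFin.symm (t₀.succ, e) 0)
              = (Fin.cons i a : Fin (k+1) → Fin n) 0 then (1:ℝ) else 0)
            = (if b t₀ = i then (1:ℝ) else 0) := by
          simp [Equiv.Perm.decomposeFin_symm_apply_zero]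
        have hfun : ∀ t : Fin k, (if (Fin.cons i b : Fin (k+1) → Fin n)
            (Equiv.Perm.decomposeFin.symm (t₀.succ, e) t.succ)
              = (Fin.cons i a : Fin (k+1) → Fin n) t.succ then (1:ℝ) else 0)
            = (if t = t₁ then (if i = a t₁ then (1:ℝ) else 0)
                else (if b (e t) = a t then (1:ℝ) else 0)) := by
          intro t
          rw [Equiv.Perm.decomposeFin_symm_apply_succ]
          rcases eq_or_ne t t₁ with rfl | htne
          · rw [if_pos rfl, het₁, Equiv.swap_apply_right]
            simp
          · rw [if_neg htne]
            have h1 : (e t).succ ≠ 0 := Fin.succ_ne_zero _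
            have h2 : (e t).succ ≠ t₀.succ := by
              simp only [ne_eq, Fin.succ_inj]
              intro hh
              exact htne (by rw [ht₁, ← hh, Equiv.symm_apply_apply])
            rw [Equiv.swap_apply_of_ne_of_ne h1 h2]
            simp
        rw [h0]
        simp_rw [hfun]
        rw [← Finset.mul_prod_erase Finset.univ _ (Finset.mem_univ t₁), if_pos rfl, ← mul_assoc]
        congr 1
        refine Finset.prod_congr rfl fun t ht => ?_
        rw [if_neg (Finset.mem_erase.mp ht).1]
      simp only [hprod]
      rw [← Finset.sum_mul]
      have hsum : ∑ i : Fin n, (if b t₀ = i then (1:ℝ) else 0) * (if i = a t₁ then (1:ℝ) else 0)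
          = (if b t₀ = a t₁ then (1:ℝ) else 0) := by
        simp [ite_and, Finset.sum_ite_eq]
      rw [hsum, ← het₁, ← Finset.mul_prod_erase Finset.univ
        (fun t => if b (e t) = a t then (1:ℝ) else 0) (Finset.mem_univ t₁)]
  -- now assemble
  calc ∑ i : Fin n, gkd (Fin.cons i b) (Fin.cons i a)
      = ∑ i : Fin n, ∑ σ : Perm (Fin (k+1)), ((Perm.sign σ : ℤ) : ℝ) *
          ∏ s, (if (Fin.cons i b : Fin (k+1) → Fin n) (σ s)
            = (Fin.cons i a : Fin (k+1) → Fin n) s then (1:ℝ) else 0) := by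
        simp_rw [gkd_eq_sum]
    _ = ∑ σ : Perm (Fin (k+1)), ((Perm.sign σ : ℤ) : ℝ) * ∑ i : Fin n,
          ∏ s, (if (Fin.cons i b : Fin (k+1) → Fin n) (σ s)
            = (Fin.cons i a : Fin (k+1) → Fin n) s then (1:ℝ) else 0) := by
        rw [Finset.sum_comm]; simp_rw [Finset.mul_sum]
    _ = ∑ pe : Fin (k+1) × Perm (Fin k),
          ((Perm.sign (Equiv.Perm.decomposeFin.symm pe) : ℤ) : ℝ) * ∑ i : Fin n,
          ∏ s, (if (Fin.cons i b : Fin (k+1) → Fin n) (Equiv.Perm.decomposeFin.symm pe s)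
            = (Fin.cons i a : Fin (k+1) → Fin n) s then (1:ℝ) else 0) := by
        exact (Equiv.sum_comp (Equiv.Perm.decomposeFin.symm :
          Fin (k+1) × Perm (Fin k) ≃ Perm (Fin (k+1))) _).symm
    _ = ∑ p : Fin (k+1), ∑ e : Perm (Fin k),
          (if p = 0 then (n : ℝ) else -1) * (((Perm.sign e : ℤ)) : ℝ) *
            ∏ t, (if b (e t) = a t then (1:ℝ) else 0) := by
        rw [Fintype.sum_prod_type]
        refine Finset.sum_congr rfl fun p _ => Finset.sum_congr rfl fun e _ => ?_
        rw [key p e, Equiv.Perm.decomposeFin.symm_sign]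
        rcases eq_or_ne p 0 with rfl | hp
        · simp only [if_pos rfl]
          push_cast
          ring
        · simp only [if_neg hp]
          push_cast
          ring
    _ = (∑ p : Fin (k+1), if p = 0 then (n : ℝ) else -1) *
          ∑ e : Perm (Fin k), ((Perm.sign e : ℤ) : ℝ) *
            ∏ t, (if b (e t) = a t then (1:ℝ) else 0) := by
        rw [Finset.sum_mul]
        refine Finset.sum_congr rfl fun p _ => ?_
        rw [Finset.mul_sum]
        refine Finset.sum_congr rfl fun e _ => ?_
        ring
    _ = ((n : ℝ) - k) * gkd b a := by
        congr 1
        · rw [Fin.sum_univ_succ]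
          simp [Fin.succ_ne_zero]
          ring
        · rw [gkd_eq_sum]

open Equiv in
lemma gkd_contract {n k : ℕ} (ginv : Matrix (Fin n) (Fin n) ℝ) (u w : Fin k → Fin n) :
    ∑ v : Fin k → Fin n, gkd u v * ∏ s, ginv (v s) (w s)
      = Matrix.det (Matrix.of fun t s => ginv (u t) (w s)) := by
  rw [Matrix.det_apply']
  simp_rw [gkd_eq_sum, Finset.sum_mul, mul_assoc]
  rw [Finset.sum_comm]
  refine Finset.sum_congr rfl fun σ _ => ?_
  rw [← Finset.mul_sum]
  congr 1
  have : ∀ v : Fin k → Fin n,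
      (∏ s, (if u (σ s) = v s then (1:ℝ) else 0)) * ∏ s, ginv (v s) (w s)
        = ∏ s, (if u (σ s) = v s then (1:ℝ) else 0) * ginv (v s) (w s) := by
    intro v; rw [← Finset.prod_mul_distrib]
  simp_rw [this]
  rw [← Fintype.prod_sum (fun s (x : Fin n) => (if u (σ s) = x then (1:ℝ) else 0) * ginv x (w s))]
  · refine Finset.prod_congr rfl fun s _ => ?_
    simp [Matrix.of_apply]

lemma cons_comp_swap {n k : ℕ} (x : Fin n) (a : Fin k → Fin n) (p r : Fin k) :
    (Fin.cons x a : Fin (k+1) → Fin n) ∘ ⇑(Equiv.swap p.succ r.succ)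
      = Fin.cons x (a ∘ ⇑(Equiv.swap p r)) := by
  funext t
  refine Fin.cases ?_ (fun t => ?_) t
  · simp [Equiv.swap_apply_of_ne_of_ne (Fin.succ_ne_zero p).symm (Fin.succ_ne_zero r).symm]
  · simp only [Function.comp_apply, Fin.cons_succ]
    rcases eq_or_ne t p with rfl | hp
    · simp
    rcases eq_or_ne t r with rfl | hr
    · simp
    · rw [Equiv.swap_apply_of_ne_of_ne (by simpa [Fin.succ_inj] using hp)
        (by simpa [Fin.succ_inj] using hr),
        Equiv.swap_apply_of_ne_of_ne hp hr]
      simp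

lemma cons_comp_rotate {n k : ℕ} (x : Fin n) (a : Fin k → Fin n) (t : Fin k) :
    ((Fin.cons x a : Fin (k+1) → Fin n) ∘ ⇑(finRotate (k+1))) t.castSucc = a t := by
  have h : finRotate (k+1) t.castSucc = t.succ := by
    rw [finRotate_succ_apply]
    ext
    simp [Fin.val_add_one_of_lt (Fin.castSucc_lt_last t)]
  simp [h]

lemma cons_comp_rotate_last {n k : ℕ} (x : Fin n) (a : Fin k → Fin n) :
    ((Fin.cons x a : Fin (k+1) → Fin n) ∘ ⇑(finRotate (k+1))) (Fin.last k) = x := by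
  simp [finRotate_last]

def pairFun {q n : ℕ} (c : Fin q → Fin n × Fin n) (t : Fin (2 * q)) : Fin n :=
  if (t : ℕ) % 2 = 0 then (c ⟨t / 2, by have := t.2; omega⟩).1
    else (c ⟨t / 2, by have := t.2; omega⟩).2

lemma pairFun_pr1 {q n : ℕ} (c : Fin q → Fin n × Fin n) (s : Fin q) :
    pairFun c (pr1 s) = (c s).1 := by
  have h : ((pr1 s : Fin (2*q)) : ℕ) % 2 = 0 := by simp only [pr1]; omega
  have ht : (⟨((pr1 s : Fin (2*q)) : ℕ) / 2, by have := (pr1 s).2; omega⟩ : Fin q) = s := by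
    ext; simp only [pr1]; omega
  rw [pairFun, if_pos h]
  exact congrArg (fun z => (c z).1) ht

lemma pairFun_pr2 {q n : ℕ} (c : Fin q → Fin n × Fin n) (s : Fin q) :
    pairFun c (pr2 s) = (c s).2 := by
  have h : ¬ ((pr2 s : Fin (2*q)) : ℕ) % 2 = 0 := by simp only [pr2]; omega
  have ht : (⟨((pr2 s : Fin (2*q)) : ℕ) / 2, by have := (pr2 s).2; omega⟩ : Fin q) = s := by
    ext; simp only [pr2]; omega
  rw [pairFun, if_neg h]
  exact congrArg (fun z => (c z).2) ht

/-- equivalence pairing up `Fin (2*q)`. -/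
def pairEquiv (q n : ℕ) : (Fin q → Fin n × Fin n) ≃ (Fin (2 * q) → Fin n) where
  toFun := pairFun
  invFun c' s := (c' (pr1 s), c' (pr2 s))
  left_inv c := by
    funext s
    exact Prod.ext (pairFun_pr1 c s) (pairFun_pr2 c s)
  right_inv c' := by
    funext t
    rcases Nat.even_or_odd (t : ℕ) with he | ho
    · have h : (t : ℕ) % 2 = 0 := Nat.even_iff.mp he
      have ht : pr1 (⟨t / 2, by have := t.2; omega⟩ : Fin q) = t := by
        ext; simp only [pr1]; omega
      show pairFun _ t = c' t
      rw [pairFun, if_pos h]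
      exact congrArg c' ht
    · have h : ¬ (t : ℕ) % 2 = 0 := by
        have := Nat.odd_iff.mp ho; omega
      have ht : pr2 (⟨t / 2, by have := t.2; omega⟩ : Fin q) = t := by
        ext; simp only [pr2]; have := Nat.odd_iff.mp ho; omega
      show pairFun _ t = c' t
      rw [pairFun, if_neg h]
      exact congrArg c' ht

lemma pairEquiv_pr1 {q n : ℕ} (c : Fin q → Fin n × Fin n) (s : Fin q) :
    pairEquiv q n c (pr1 s) = (c s).1 := pairFun_pr1 c s

lemma pairEquiv_pr2 {q n : ℕ} (c : Fin q → Fin n × Fin n) (s : Fin q) :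
    pairEquiv q n c (pr2 s) = (c s).2 := pairFun_pr2 c s

/-- sum-type pairing of `Fin (2*q)`. -/
def sumPairEquiv (q : ℕ) : Fin q ⊕ Fin q ≃ Fin (2 * q) where
  toFun := Sum.elim pr1 pr2
  invFun t := if (t : ℕ) % 2 = 0 then Sum.inl ⟨t / 2, by have := t.2; omega⟩
    else Sum.inr ⟨t / 2, by have := t.2; omega⟩
  left_inv x := by
    rcases x with s | s
    · have h : ((pr1 s : Fin (2*q)) : ℕ) % 2 = 0 := by simp only [pr1]; omega
      simp only [Sum.elim_inl, h, if_pos]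
      congr 1
      ext; simp only [pr1]; omega
    · have h : ¬ ((pr2 s : Fin (2*q)) : ℕ) % 2 = 0 := by simp only [pr2]; omega
      simp only [Sum.elim_inr, h, ↓reduceIte]
      congr 1
      ext; simp only [pr2]; omega
  right_inv t := by
    rcases Nat.even_or_odd (t : ℕ) with he | ho
    · have h : (t : ℕ) % 2 = 0 := Nat.even_iff.mp he
      simp only [h, if_pos, reduceIte, Sum.elim_inl]
      ext; simp only [pr1]; omega
    · have h : ¬ (t : ℕ) % 2 = 0 := by have := Nat.odd_iff.mp ho; omega
      simp only [if_neg h, Sum.elim_inr]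
      ext; simp only [pr2]; have := Nat.odd_iff.mp ho; omega

lemma prod_pairs {q : ℕ} {M : Type} [CommMonoid M] (f : Fin (2 * q) → M) :
    ∏ t, f t = ∏ s : Fin q, (f (pr1 s) * f (pr2 s)) := by
  rw [← Equiv.prod_comp (sumPairEquiv q) f, Fintype.prod_sum_type]
  simp only [sumPairEquiv, Equiv.coe_fn_mk, Sum.elim_inl, Sum.elim_inr]
  rw [← Finset.prod_mul_distrib]

lemma sum_cons_split {n k : ℕ} {M : Type} [AddCommMonoid M] (f : (Fin (k+1) → Fin n) → M) :
    ∑ v : Fin (k+1) → Fin n, f v = ∑ x : Fin n, ∑ a : Fin k → Fin n, f (Fin.cons x a) := by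
  rw [← (Fin.consEquiv (fun _ : Fin (k+1) => Fin n)).sum_comp f]
  rw [Fintype.sum_prod_type]
  rfl


/-- Antisymmetrization: replacing each difference factor by its first term doubles. -/
lemma sum_gkd_prod_sub {n q : ℕ} (w : Fin (2*q+1) → Fin n) (x0 : Fin n)
    (U : Fin q → Fin n → Fin n → ℝ) :
    ∑ a : Fin (2*q) → Fin n, gkd w (Fin.cons x0 a) *
        ∏ s, (U s (a (pr1 s)) (a (pr2 s)) - U s (a (pr2 s)) (a (pr1 s)))
    = 2^q * ∑ a : Fin (2*q) → Fin n, gkd w (Fin.cons x0 a) *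
        ∏ s, U s (a (pr1 s)) (a (pr2 s)) := by
  -- generalized claim over subsets
  have claim : ∀ T : Finset (Fin q),
      ∑ a : Fin (2*q) → Fin n, gkd w (Fin.cons x0 a) *
        ∏ s, (if s ∈ T then U s (a (pr1 s)) (a (pr2 s)) - U s (a (pr2 s)) (a (pr1 s))
          else U s (a (pr1 s)) (a (pr2 s)))
      = 2^(T.card) * ∑ a : Fin (2*q) → Fin n, gkd w (Fin.cons x0 a) *
          ∏ s, U s (a (pr1 s)) (a (pr2 s)) := by
    intro T
    induction T using Finset.induction_on with
    | empty => simp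
    | @insert s₀ T hs₀ ih =>
      rw [Finset.card_insert_of_notMem hs₀, pow_succ, mul_comm (2^T.card) 2, mul_assoc, ← ih]
      -- split the s₀ factor
      have hsplit : ∀ a : Fin (2*q) → Fin n,
          (∏ s, (if s ∈ insert s₀ T then
              U s (a (pr1 s)) (a (pr2 s)) - U s (a (pr2 s)) (a (pr1 s))
            else U s (a (pr1 s)) (a (pr2 s))))
          = (U s₀ (a (pr1 s₀)) (a (pr2 s₀)) - U s₀ (a (pr2 s₀)) (a (pr1 s₀))) *
            ∏ s ∈ Finset.univ.erase s₀, (if s ∈ T then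
              U s (a (pr1 s)) (a (pr2 s)) - U s (a (pr2 s)) (a (pr1 s))
            else U s (a (pr1 s)) (a (pr2 s))) := by
        intro a
        rw [← Finset.mul_prod_erase Finset.univ _ (Finset.mem_univ s₀), if_pos (Finset.mem_insert_self s₀ T)]
        congr 1
        refine Finset.prod_congr rfl fun s hs => ?_
        have : (s ∈ insert s₀ T) ↔ (s ∈ T) := by
          simp [Finset.mem_insert, (Finset.mem_erase.mp hs).1]
        simp only [this]
      have hT : ∀ a : Fin (2*q) → Fin n,
          (∏ s, (if s ∈ T then
              U s (a (pr1 s)) (a (pr2 s)) - U s (a (pr2 s)) (a (pr1 s))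
            else U s (a (pr1 s)) (a (pr2 s))))
          = U s₀ (a (pr1 s₀)) (a (pr2 s₀)) *
            ∏ s ∈ Finset.univ.erase s₀, (if s ∈ T then
              U s (a (pr1 s)) (a (pr2 s)) - U s (a (pr2 s)) (a (pr1 s))
            else U s (a (pr1 s)) (a (pr2 s))) := by
        intro a
        rw [← Finset.mul_prod_erase Finset.univ _ (Finset.mem_univ s₀), if_neg hs₀]
      simp_rw [hsplit, hT, sub_mul, mul_sub, Finset.sum_sub_distrib]
      set P : (Fin (2*q) → Fin n) → ℝ := fun a =>
        ∏ s ∈ Finset.univ.erase s₀, (if s ∈ T then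
          U s (a (pr1 s)) (a (pr2 s)) - U s (a (pr2 s)) (a (pr1 s))
        else U s (a (pr1 s)) (a (pr2 s))) with hP
      set Φ : (Fin (2*q) → Fin n) → ℝ := fun a =>
        gkd w (Fin.cons x0 a) * (U s₀ (a (pr1 s₀)) (a (pr2 s₀)) * P a) with hΦ
      have hswap :
          ∑ a : Fin (2*q) → Fin n, gkd w (Fin.cons x0 a) *
            (U s₀ (a (pr2 s₀)) (a (pr1 s₀)) * P a)
          = - ∑ a : Fin (2*q) → Fin n, Φ a := by
        set τ : Equiv.Perm (Fin (2*q)) := Equiv.swap (pr1 s₀) (pr2 s₀) with hτ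
        have hsum := Equiv.sum_comp (Equiv.arrowCongr τ (Equiv.refl (Fin n))) Φ
        rw [← hsum, ← Finset.sum_neg_distrib]
        refine Finset.sum_congr rfl fun a _ => ?_
        have hEa : (Equiv.arrowCongr τ (Equiv.refl (Fin n))) a = a ∘ ⇑τ := by
          funext t
          simp [Equiv.arrowCongr_apply, hτ, Function.comp]
        rw [hEa, hΦ]
        have hp12 : pr1 s₀ ≠ pr2 s₀ := pr1_ne_pr2 s₀ s₀
        have hgkd : gkd w (Fin.cons x0 (a ∘ ⇑τ)) = - gkd w (Fin.cons x0 a) := by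
          rw [hτ, ← cons_comp_swap x0 a (pr1 s₀) (pr2 s₀)]
          exact gkd_swap_right w (Fin.cons x0 a) _ _ (by
            simp only [ne_eq, Fin.succ_inj]; exact hp12)
        have h1 : (a ∘ ⇑τ) (pr1 s₀) = a (pr2 s₀) := by simp [hτ]
        have h2 : (a ∘ ⇑τ) (pr2 s₀) = a (pr1 s₀) := by simp [hτ]
        have hPτ : P (a ∘ ⇑τ) = P a := by
          rw [hP]
          refine Finset.prod_congr rfl fun s hs => ?_
          have hss₀ : s ≠ s₀ := (Finset.mem_erase.mp hs).1
          have e1 : (a ∘ ⇑τ) (pr1 s) = a (pr1 s) := by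
            simp only [Function.comp_apply, hτ]
            rw [Equiv.swap_apply_of_ne_of_ne (fun h => hss₀ (pr1_inj h)) (pr1_ne_pr2 s s₀)]
          have e2 : (a ∘ ⇑τ) (pr2 s) = a (pr2 s) := by
            simp only [Function.comp_apply, hτ]
            rw [Equiv.swap_apply_of_ne_of_ne (Ne.symm (pr1_ne_pr2 s₀ s)) (fun h => hss₀ (pr2_inj h))]
          rw [e1, e2]
        simp only [hgkd, h1, h2, hPτ]
        ring
      rw [hswap, sub_neg_eq_add]
      simp only [hΦ]
      ring
  have := claim Finset.univ
  simpa using this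

section Main
variable {n q : ℕ} {W : Type} [NormedAddCommGroup W] [InnerProductSpace ℝ W]

/-- `X` built from the mixed second fundamental form. -/
noncomputable def Xf (q : ℕ) (Bm : Fin n → Fin n → W) (a b : Fin (2*q) → Fin n) : ℝ :=
  ∏ s : Fin q, ⟪Bm (a (pr1 s)) (b (pr1 s)), Bm (a (pr2 s)) (b (pr2 s))⟫

/-- `X` built from the lowered second fundamental form. -/
noncomputable def Xl (q : ℕ) (Blow : Fin n → Fin n → W) (c b : Fin (2*q) → Fin n) : ℝ :=
  ∏ s : Fin q, ⟪Blow (c (pr1 s)) (b (pr1 s)), Blow (c (pr2 s)) (b (pr2 s))⟫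

/-- `F i l`: the (1,1) Lovelock-type contraction. -/
noncomputable def Ff (q : ℕ) (Bm : Fin n → Fin n → W) (i l : Fin n) : ℝ :=
  ∑ a : Fin (2*q) → Fin n, ∑ b : Fin (2*q) → Fin n,
    gkd (Fin.cons i b) (Fin.cons l a) * Xf q Bm a b

lemma sum4_comm {α β γ δ : Type} [Fintype α] [Fintype β] [Fintype γ] [Fintype δ]
    {M : Type} [AddCommMonoid M] (f : α → β → γ → δ → M) :
    ∑ a, ∑ b, ∑ c, ∑ d, f a b c d = ∑ c, ∑ d, ∑ a, ∑ b, f a b c d := by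
  calc ∑ a, ∑ b, ∑ c, ∑ d, f a b c d
      = ∑ a, ∑ c, ∑ b, ∑ d, f a b c d :=
        Finset.sum_congr rfl fun a _ => Finset.sum_comm
    _ = ∑ c, ∑ a, ∑ b, ∑ d, f a b c d := Finset.sum_comm
    _ = ∑ c, ∑ a, ∑ d, ∑ b, f a b c d :=
        Finset.sum_congr rfl fun c _ => Finset.sum_congr rfl fun a _ => Finset.sum_comm
    _ = ∑ c, ∑ d, ∑ a, ∑ b, f a b c d :=
        Finset.sum_congr rfl fun c _ => Finset.sum_comm

-- expansion of Xf in terms of Xl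
lemma Xf_expand (ginv : Matrix (Fin n) (Fin n) ℝ)
    (Blow : Fin n → Fin n → W) (Bm : Fin n → Fin n → W)
    (hBm : ∀ a b, Bm a b = ∑ c, ginv a c • Blow c b)
    (a b : Fin (2*q) → Fin n) :
    Xf q Bm a b = ∑ c : Fin (2*q) → Fin n,
      (∏ t, ginv (a t) (c t)) * Xl q Blow c b := by
  have hfac : ∀ s : Fin q,
      (⟪Bm (a (pr1 s)) (b (pr1 s)), Bm (a (pr2 s)) (b (pr2 s))⟫ : ℝ)
      = ∑ p : Fin n × Fin n, ginv (a (pr1 s)) p.1 * ginv (a (pr2 s)) p.2 *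
          ⟪Blow p.1 (b (pr1 s)), Blow p.2 (b (pr2 s))⟫ := by
    intro s
    rw [hBm, hBm, sum_inner, Fintype.sum_prod_type]
    refine Finset.sum_congr rfl fun x _ => ?_
    rw [real_inner_smul_left, inner_sum]
    rw [Finset.mul_sum]
    refine Finset.sum_congr rfl fun y _ => ?_
    rw [real_inner_smul_right]
    ring
  show (∏ s : Fin q, ⟪Bm (a (pr1 s)) (b (pr1 s)), Bm (a (pr2 s)) (b (pr2 s))⟫) = _
  rw [Finset.prod_congr rfl (fun s _ => hfac s)]
  rw [Fintype.prod_sum (fun s (p : Fin n × Fin n) => ginv (a (pr1 s)) p.1 * ginv (a (pr2 s)) p.2 *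
          ⟪Blow p.1 (b (pr1 s)), Blow p.2 (b (pr2 s))⟫)]
  rw [← Equiv.sum_comp (pairEquiv q n)
    (fun c' => (∏ t, ginv (a t) (c' t)) * Xl q Blow c' b)]
  refine Finset.sum_congr rfl fun x _ => ?_
  rw [Xl, prod_pairs (fun t => ginv (a t) (pairEquiv q n x t)), ← Finset.prod_mul_distrib]
  refine Finset.prod_congr rfl fun s _ => ?_
  rw [pairEquiv_pr1, pairEquiv_pr2]

lemma Xl_symm (Blow : Fin n → Fin n → W) (hBsym : ∀ i j, Blow i j = Blow j i)
    (c b : Fin (2*q) → Fin n) : Xl q Blow c b = Xl q Blow b c := by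
  rw [Xl, Xl]
  refine Finset.prod_congr rfl fun s _ => ?_
  rw [hBsym (c (pr1 s)) (b (pr1 s)), hBsym (c (pr2 s)) (b (pr2 s))]

lemma det_ginv_symm {k : ℕ} (ginv : Matrix (Fin n) (Fin n) ℝ)
    (hginvsym : ∀ i j, ginv i j = ginv j i) (u w : Fin k → Fin n) :
    Matrix.det (Matrix.of fun t s => ginv (u t) (w s))
      = Matrix.det (Matrix.of fun t s => ginv (w t) (u s)) := by
  rw [← Matrix.det_transpose]
  congr 1
  ext t s
  simp only [Matrix.transpose_apply, Matrix.of_apply]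
  exact hginvsym (u s) (w t)

lemma H_eq_det (ginv : Matrix (Fin n) (Fin n) ℝ)
    (Blow : Fin n → Fin n → W) (Bm : Fin n → Fin n → W)
    (hBm : ∀ a b, Bm a b = ∑ c, ginv a c • Blow c b)
    (i m : Fin n) :
    ∑ l, Ff q Bm i l * ginv l m
      = ∑ b : Fin (2*q) → Fin n, ∑ c : Fin (2*q) → Fin n,
          Matrix.det (Matrix.of fun t s => ginv ((Fin.cons i b : Fin (2*q+1) → Fin n) t)
            ((Fin.cons m c : Fin (2*q+1) → Fin n) s)) * Xl q Blow c b := by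
  calc ∑ l, Ff q Bm i l * ginv l m
      = ∑ l : Fin n, ∑ a : Fin (2*q) → Fin n, ∑ b : Fin (2*q) → Fin n,
          ∑ c : Fin (2*q) → Fin n, gkd (Fin.cons i b) (Fin.cons l a) *
          ((∏ t, ginv (a t) (c t)) * Xl q Blow c b) * ginv l m := by
        refine Finset.sum_congr rfl fun l _ => ?_
        rw [Ff, Finset.sum_mul]
        refine Finset.sum_congr rfl fun a _ => ?_
        rw [Finset.sum_mul]
        refine Finset.sum_congr rfl fun b _ => ?_
        rw [Xf_expand ginv Blow Bm hBm, Finset.mul_sum, Finset.sum_mul]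
    _ = ∑ b : Fin (2*q) → Fin n, ∑ c : Fin (2*q) → Fin n,
          ∑ l : Fin n, ∑ a : Fin (2*q) → Fin n, gkd (Fin.cons i b) (Fin.cons l a) *
          ((∏ t, ginv (a t) (c t)) * Xl q Blow c b) * ginv l m :=
        sum4_comm _
    _ = ∑ b : Fin (2*q) → Fin n, ∑ c : Fin (2*q) → Fin n,
          (∑ l : Fin n, ∑ a : Fin (2*q) → Fin n, gkd (Fin.cons i b) (Fin.cons l a) *
            ∏ t' : Fin (2*q+1), ginv ((Fin.cons l a : Fin (2*q+1) → Fin n) t')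
              ((Fin.cons m c : Fin (2*q+1) → Fin n) t')) * Xl q Blow c b := by
        refine Finset.sum_congr rfl fun b _ => Finset.sum_congr rfl fun c _ => ?_
        rw [Finset.sum_mul]
        refine Finset.sum_congr rfl fun l _ => ?_
        rw [Finset.sum_mul]
        refine Finset.sum_congr rfl fun a _ => ?_
        have hprod : ∏ t' : Fin (2*q+1), ginv ((Fin.cons l a : Fin (2*q+1) → Fin n) t')
              ((Fin.cons m c : Fin (2*q+1) → Fin n) t')
            = ginv l m * ∏ t, ginv (a t) (c t) := by
          rw [Fin.prod_univ_succ]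
          simp
        rw [hprod]
        ring
    _ = ∑ b : Fin (2*q) → Fin n, ∑ c : Fin (2*q) → Fin n,
          Matrix.det (Matrix.of fun t s => ginv ((Fin.cons i b : Fin (2*q+1) → Fin n) t)
            ((Fin.cons m c : Fin (2*q+1) → Fin n) s)) * Xl q Blow c b := by
        refine Finset.sum_congr rfl fun b _ => Finset.sum_congr rfl fun c _ => ?_
        congr 1
        rw [← gkd_contract ginv (Fin.cons i b) (Fin.cons m c), sum_cons_split]

lemma H_symm (ginv : Matrix (Fin n) (Fin n) ℝ) (hginvsym : ∀ i j, ginv i j = ginv j i)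
    (Blow : Fin n → Fin n → W) (hBsym : ∀ i j, Blow i j = Blow j i)
    (Bm : Fin n → Fin n → W) (hBm : ∀ a b, Bm a b = ∑ c, ginv a c • Blow c b)
    (i m : Fin n) :
    ∑ l, Ff q Bm i l * ginv l m = ∑ l, Ff q Bm m l * ginv l i := by
  rw [H_eq_det ginv Blow Bm hBm i m, H_eq_det ginv Blow Bm hBm m i, Finset.sum_comm]
  refine Finset.sum_congr rfl fun c _ => Finset.sum_congr rfl fun b _ => ?_
  rw [det_ginv_symm ginv hginvsym, Xl_symm Blow hBsym]


lemma sum3_comm {α β γ : Type} [Fintype α] [Fintype β] [Fintype γ]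
    {M : Type} [AddCommMonoid M] (f : α → β → γ → M) :
    ∑ a, ∑ b, ∑ c, f a b c = ∑ c, ∑ a, ∑ b, f a b c := by
  calc ∑ a, ∑ b, ∑ c, f a b c
      = ∑ a, ∑ c, ∑ b, f a b c := Finset.sum_congr rfl fun a _ => Finset.sum_comm
    _ = ∑ c, ∑ a, ∑ b, f a b c := Finset.sum_comm

lemma sum3_comm' {α β γ : Type} [Fintype α] [Fintype β] [Fintype γ]
    {M : Type} [AddCommMonoid M] (f : α → β → γ → M) :
    ∑ a, ∑ b, ∑ c, f a b c = ∑ b, ∑ c, ∑ a, f a b c :=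
  (sum3_comm fun b c a => f a b c).symm


end Main

open Matrix

/-- for an isometric immersion `ψ : M^n → ℝ^d` with induced metric `g`,
`q`-th (divergence-free) Lovelock tensor `G_{(q)}` and `Y = ψ*Z̄^⊤` the tangential part of
the ambient position field, one has
`div_g(ι_Y G_{(q)}) = −((2q)!/2)[(n−2q) S_{(2q)} + (2q+1)⟨S_{(2q+1)}, Z̄⟩]`.

Formalized pointwise in coordinates at an arbitrary point.  Data: `g`, `ginv` the metric
and inverse; `W` the ambient/normal inner-product space; `Blow` the symmetric
normal-valued second fundamental form, `Bm a b = B^a_b`; `Zbar ∈ W` the ambient position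
vector `Z̄` at the point; `Rlow` the Riemann tensor given by the Gauss equation; `G` the
`q`-th Lovelock tensor built from the mixed Riemann tensor `Rmix`;
`DG k i j = ∇_k G_{(q)ij}` its covariant derivative, with `hdivfree : ∇^i G_{(q)ij} = 0`;
`Yup`, `DYup i l = ∇_i Y^l` the components of `Y` and their covariant derivatives, with
`hLie : (L_Y g)_{ij} = ∇_i Y_j + ∇_j Y_i = 2 g_{ij} + 2⟨B_{ij}, Z̄⟩` (the identity
`L_Y g = 2g + 2B_{Z̄}`); `Dω i j = ∇_i ω_j` for the one-form `ω = ι_Y G_{(q)}`, tied to the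
other data by the Leibniz rule `hLeibniz`.  `S2q` is the `2q`-th mean curvature and `Svec`
the normal-valued `(2q+1)`-th mean curvature.  The conclusion computes
`div_g ω = g^{ij} ∇_i ω_j`. -/
theorem div_lovelock_contraction_with_tangential_position (n q d : ℕ)
    (hq : 0 < q) (hqn : 2 * q < n) (hd : n < d)
    (g ginv : Matrix (Fin n) (Fin n) ℝ)
    (hgsym : ∀ i j, g i j = g j i)
    (hinv : ∀ i j, (∑ k, g i k * ginv k j) = if i = j then (1 : ℝ) else 0)
    (hinv' : ∀ i j, (∑ k, ginv i k * g k j) = if i = j then (1 : ℝ) else 0)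
    (W : Type) [NormedAddCommGroup W] [InnerProductSpace ℝ W]
    (Blow : Fin n → Fin n → W)
    (hBsym : ∀ i j, Blow i j = Blow j i)
    (Bm : Fin n → Fin n → W)
    (hBm : ∀ a b, Bm a b = ∑ c, ginv a c • Blow c b)
    (Zbar : W)
    (Rlow : Fin n → Fin n → Fin n → Fin n → ℝ)
    (hGauss : ∀ i j k l, Rlow i j k l = ⟪Blow i k, Blow j l⟫ - ⟪Blow i l, Blow j k⟫)
    (Rmix : Fin n → Fin n → Fin n → Fin n → ℝ)   -- Rmix a b c d = R_{ab}^{cd}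
    (hRmix : ∀ a b c d, Rmix a b c d = ∑ e, ∑ f, Rlow a b e f * ginv e c * ginv f d)
    (G : Matrix (Fin n) (Fin n) ℝ)
    (hG : ∀ i j, G i j = -(1 / 2 ^ (q + 1)) * ∑ k, g i k *
      ∑ a : Fin (2 * q) → Fin n, ∑ b : Fin (2 * q) → Fin n,
        gkd (Fin.cons k b : Fin (2 * q + 1) → Fin n) (Fin.cons j a) *
        ∏ s : Fin q, Rmix (b (pr1 s)) (b (pr2 s)) (a (pr1 s)) (a (pr2 s)))
    (DG : Fin n → Fin n → Fin n → ℝ)             -- DG k i j = ∇_k G_{(q)ij}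
    (hdivfree : ∀ j, (∑ i, ∑ k, ginv i k * DG i k j) = 0)
    (Yup : Fin n → ℝ)                            -- Y^l
    (DYup : Fin n → Fin n → ℝ)                   -- DYup i l = ∇_i Y^l
    (hLie : ∀ i j, (∑ m, g j m * DYup i m) + (∑ m, g i m * DYup j m)
      = 2 * g i j + 2 * ⟪Blow i j, Zbar⟫)
    (Dω : Fin n → Fin n → ℝ)                     -- Dω i j = ∇_i ω_j, ω = ι_Y G_{(q)}
    (hLeibniz : ∀ i j, Dω i j =
      (∑ l, DG i j l * Yup l) + ∑ l, G j l * DYup i l)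
    (S2q : ℝ)
    (hS2q : S2q = (1 / ((2 * q).factorial : ℝ)) *
      ∑ a : Fin (2 * q) → Fin n, ∑ b : Fin (2 * q) → Fin n,
        gkd b a * ∏ s : Fin q,
          ⟪Bm (a (pr1 s)) (b (pr1 s)), Bm (a (pr2 s)) (b (pr2 s))⟫)
    (Svec : W)
    (hSvec : Svec = (1 / ((2 * q + 1).factorial : ℝ)) •
      ∑ a : Fin (2 * q + 1) → Fin n, ∑ b : Fin (2 * q + 1) → Fin n,
        (gkd b a * ∏ s : Fin q,
            ⟪Bm (a (pr1 s).castSucc) (b (pr1 s).castSucc),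
              Bm (a (pr2 s).castSucc) (b (pr2 s).castSucc)⟫) •
          Bm (a (Fin.last (2 * q))) (b (Fin.last (2 * q)))) :
    -- div_g(ι_Y G_{(q)}) = −((2q)!/2)[(n−2q) S_{(2q)} + (2q+1)⟨S_{(2q+1)}, Z̄⟩]
    (∑ i, ∑ j, ginv i j * Dω i j)
      = -(((2 * q).factorial : ℝ) / 2) *
          (((n : ℝ) - 2 * q) * S2q + (2 * q + 1) * ⟪Svec, Zbar⟫) := by
  classical
  -- symmetry of the inverse metric
  have hg : g * ginv = 1 := by
    ext i j; rw [Matrix.mul_apply]; simpa [Matrix.one_apply] using hinv i j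
  have hg' : ginv * g = 1 := by
    ext i j; rw [Matrix.mul_apply]; simpa [Matrix.one_apply] using hinv' i j
  have hginvsym : ∀ i j, ginv i j = ginv j i := by
    have hgt : gᵀ = g := by ext i j; exact hgsym j i
    have h1 : g * ginvᵀ = 1 := by
      calc g * ginvᵀ = gᵀ * ginvᵀ := by rw [hgt]
        _ = (ginv * g)ᵀ := by rw [Matrix.transpose_mul]
        _ = 1 := by rw [hg', Matrix.transpose_one]
    have htr : ginvᵀ = ginv := by
      calc ginvᵀ = 1 * ginvᵀ := (one_mul _).symm
        _ = (ginv * g) * ginvᵀ := by rw [hg']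
        _ = ginv * (g * ginvᵀ) := by rw [Matrix.mul_assoc]
        _ = ginv := by rw [h1, Matrix.mul_one]
    intro i j
    conv_lhs => rw [← htr]
    rfl
  -- Step 1 : kill the divergence term
  have step1 : (∑ i, ∑ j, ginv i j * Dω i j)
      = ∑ i, ∑ j, ginv i j * ∑ l, G j l * DYup i l := by
    have hzero : ∑ i, ∑ j, ginv i j * ∑ l, DG i j l * Yup l = 0 := by
      have h1 : ∀ i j : Fin n, ginv i j * ∑ l, DG i j l * Yup l
          = ∑ l, ginv i j * DG i j l * Yup l := by
        intro i j; rw [Finset.mul_sum]; exact Finset.sum_congr rfl fun l _ => by ring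
      simp_rw [h1]
      calc ∑ i, ∑ j, ∑ l, ginv i j * DG i j l * Yup l
          = ∑ l, ∑ i, ∑ j : Fin n, ginv i j * DG i j l * Yup l := sum3_comm _
        _ = ∑ l : Fin n, (∑ i, ∑ j, ginv i j * DG i j l) * Yup l := by
            refine Finset.sum_congr rfl fun l _ => ?_
            rw [Finset.sum_mul]
            exact Finset.sum_congr rfl fun i _ => by rw [Finset.sum_mul]
        _ = 0 := by simp [hdivfree]
    calc ∑ i, ∑ j, ginv i j * Dω i j
        = ∑ i, ∑ j, (ginv i j * ∑ l, DG i j l * Yup l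
            + ginv i j * ∑ l, G j l * DYup i l) := by
          refine Finset.sum_congr rfl fun i _ => Finset.sum_congr rfl fun j _ => ?_
          rw [hLeibniz, mul_add]
      _ = (∑ i, ∑ j, ginv i j * ∑ l, DG i j l * Yup l)
          + ∑ i, ∑ j, ginv i j * ∑ l, G j l * DYup i l := by
          rw [← Finset.sum_add_distrib]
          exact Finset.sum_congr rfl fun i _ => by rw [← Finset.sum_add_distrib]
      _ = ∑ i, ∑ j, ginv i j * ∑ l, G j l * DYup i l := by rw [hzero, zero_add]
  -- mixed Lovelock tensor
  have hGmix : ∀ i l : Fin n, (∑ j, ginv i j * G j l)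
      = -(1/2^(q+1)) * ∑ a : Fin (2*q) → Fin n, ∑ b : Fin (2*q) → Fin n,
          gkd (Fin.cons i b) (Fin.cons l a) *
          ∏ s : Fin q, Rmix (b (pr1 s)) (b (pr2 s)) (a (pr1 s)) (a (pr2 s)) := by
    intro i l
    calc ∑ j, ginv i j * G j l
        = ∑ j, ∑ k, ginv i j * g j k * (-(1/2^(q+1)) *
            ∑ a : Fin (2*q) → Fin n, ∑ b : Fin (2*q) → Fin n,
              gkd (Fin.cons k b) (Fin.cons l a) *
              ∏ s : Fin q, Rmix (b (pr1 s)) (b (pr2 s)) (a (pr1 s)) (a (pr2 s))) := by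
          refine Finset.sum_congr rfl fun j _ => ?_
          rw [hG j l, Finset.mul_sum, Finset.mul_sum]
          exact Finset.sum_congr rfl fun k _ => by ring
      _ = ∑ k : Fin n, (∑ j, ginv i j * g j k) * (-(1/2^(q+1)) *
            ∑ a : Fin (2*q) → Fin n, ∑ b : Fin (2*q) → Fin n,
              gkd (Fin.cons k b) (Fin.cons l a) *
              ∏ s : Fin q, Rmix (b (pr1 s)) (b (pr2 s)) (a (pr1 s)) (a (pr2 s))) := by
          rw [Finset.sum_comm]
          exact Finset.sum_congr rfl fun k _ => by rw [Finset.sum_mul]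
      _ = -(1/2^(q+1)) * ∑ a : Fin (2*q) → Fin n, ∑ b : Fin (2*q) → Fin n,
            gkd (Fin.cons i b) (Fin.cons l a) *
            ∏ s : Fin q, Rmix (b (pr1 s)) (b (pr2 s)) (a (pr1 s)) (a (pr2 s)) := by
          simp_rw [hinv', ite_mul, one_mul, zero_mul]
          rw [Finset.sum_ite_eq Finset.univ i]
          simp
  -- Gauss equation in mixed form
  have hinner2 : ∀ γ α δ β : Fin n, (⟪Bm γ α, Bm δ β⟫ : ℝ)
      = ∑ e, ∑ f, ginv γ e * ginv δ f * ⟪Blow e α, Blow f β⟫ := by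
    intro γ α δ β
    rw [hBm, hBm, sum_inner]
    refine Finset.sum_congr rfl fun e _ => ?_
    rw [real_inner_smul_left, inner_sum, Finset.mul_sum]
    refine Finset.sum_congr rfl fun f _ => ?_
    rw [real_inner_smul_right]
    ring
  have hRpair : ∀ α β γ δ : Fin n,
      Rmix α β γ δ = ⟪Bm γ α, Bm δ β⟫ - ⟪Bm δ α, Bm γ β⟫ := by
    intro α β γ δ
    rw [hRmix]
    have hsplit : ∀ e f : Fin n, Rlow α β e f * ginv e γ * ginv f δ
        = ⟪Blow α e, Blow β f⟫ * ginv e γ * ginv f δ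
          - ⟪Blow α f, Blow β e⟫ * ginv e γ * ginv f δ := by
      intro e f; rw [hGauss]; ring
    simp_rw [hsplit, Finset.sum_sub_distrib]
    congr 1
    · rw [hinner2]
      refine Finset.sum_congr rfl fun e _ => Finset.sum_congr rfl fun f _ => ?_
      rw [hBsym α e, hBsym β f, hginvsym e γ, hginvsym f δ]
      ring
    · rw [hinner2, Finset.sum_comm]
      refine Finset.sum_congr rfl fun f _ => Finset.sum_congr rfl fun e _ => ?_
      rw [hBsym α f, hBsym β e, hginvsym e γ, hginvsym f δ]
      ring
  -- 2^q expansion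
  have hEF : ∀ i l : Fin n,
      (∑ a : Fin (2*q) → Fin n, ∑ b : Fin (2*q) → Fin n,
        gkd (Fin.cons i b) (Fin.cons l a) *
        ∏ s : Fin q, Rmix (b (pr1 s)) (b (pr2 s)) (a (pr1 s)) (a (pr2 s)))
      = 2^q * Ff q Bm i l := by
    intro i l
    rw [Finset.sum_comm]
    have hper : ∀ b : Fin (2*q) → Fin n,
        (∑ a : Fin (2*q) → Fin n, gkd (Fin.cons i b) (Fin.cons l a) *
          ∏ s : Fin q, Rmix (b (pr1 s)) (b (pr2 s)) (a (pr1 s)) (a (pr2 s)))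
        = 2^q * ∑ a : Fin (2*q) → Fin n, gkd (Fin.cons i b) (Fin.cons l a) * Xf q Bm a b := by
      intro b
      set U : Fin q → Fin n → Fin n → ℝ :=
        fun s x y => ⟪Bm x (b (pr1 s)), Bm y (b (pr2 s))⟫ with hU
      have h1 : (∑ a : Fin (2*q) → Fin n, gkd (Fin.cons i b) (Fin.cons l a) *
            ∏ s : Fin q, Rmix (b (pr1 s)) (b (pr2 s)) (a (pr1 s)) (a (pr2 s)))
          = ∑ a : Fin (2*q) → Fin n, gkd (Fin.cons i b) (Fin.cons l a) *
            ∏ s : Fin q, (U s (a (pr1 s)) (a (pr2 s)) - U s (a (pr2 s)) (a (pr1 s))) := by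
        refine Finset.sum_congr rfl fun a _ => ?_
        congr 1
        refine Finset.prod_congr rfl fun s _ => ?_
        rw [hU]
        exact hRpair _ _ _ _
      have h2 : ∀ a : Fin (2*q) → Fin n,
          (∏ s : Fin q, U s (a (pr1 s)) (a (pr2 s))) = Xf q Bm a b := by
        intro a
        rw [hU, Xf]
      rw [h1, sum_gkd_prod_sub (Fin.cons i b) l U]
      exact congrArg (2^q * ·) (Finset.sum_congr rfl fun a _ => by rw [h2 a])
    simp_rw [hper]
    rw [← Finset.mul_sum, Ff, Finset.sum_comm]
  -- Step 2: reduce to the F-contraction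
  have h2q : (2:ℝ)^q ≠ 0 := by positivity
  have step2 : (∑ i, ∑ j, ginv i j * ∑ l, G j l * DYup i l)
      = -(1/2) * ∑ i, ∑ l, Ff q Bm i l * DYup i l := by
    have hper : ∀ i : Fin n, (∑ j, ginv i j * ∑ l, G j l * DYup i l)
        = ∑ l, (∑ j, ginv i j * G j l) * DYup i l := by
      intro i
      calc ∑ j, ginv i j * ∑ l, G j l * DYup i l
          = ∑ j, ∑ l, ginv i j * G j l * DYup i l := by
            refine Finset.sum_congr rfl fun j _ => ?_
            rw [Finset.mul_sum]
            exact Finset.sum_congr rfl fun l _ => by ring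
        _ = ∑ l, ∑ j, ginv i j * G j l * DYup i l := Finset.sum_comm
        _ = ∑ l, (∑ j, ginv i j * G j l) * DYup i l := by
            exact Finset.sum_congr rfl fun l _ => by rw [Finset.sum_mul]
    simp_rw [hper]
    rw [Finset.mul_sum]
    refine Finset.sum_congr rfl fun i _ => ?_
    rw [Finset.mul_sum]
    refine Finset.sum_congr rfl fun l _ => ?_
    rw [hGmix i l, hEF i l]
    rw [pow_succ]
    field_simp
  -- the (1,1)-contraction H and its symmetry
  have hHsym : ∀ i m : Fin n, (∑ l, Ff q Bm i l * ginv l m) = ∑ l, Ff q Bm m l * ginv l i :=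
    fun i m => H_symm ginv hginvsym Blow hBsym Bm hBm i m
  have hFH : ∀ i l : Fin n, Ff q Bm i l = ∑ m, (∑ l', Ff q Bm i l' * ginv l' m) * g m l := by
    intro i l
    calc Ff q Bm i l
        = ∑ l', Ff q Bm i l' * (if l' = l then (1:ℝ) else 0) := by
          rw [Finset.sum_congr rfl (fun l' _ => by rw [mul_ite, mul_one, mul_zero])]
          rw [Finset.sum_ite_eq' Finset.univ l]
          simp
      _ = ∑ l', Ff q Bm i l' * ∑ m, ginv l' m * g m l := by
          exact Finset.sum_congr rfl fun l' _ => by rw [hinv']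
      _ = ∑ l', ∑ m, Ff q Bm i l' * ginv l' m * g m l := by
          refine Finset.sum_congr rfl fun l' _ => ?_
          rw [Finset.mul_sum]
          exact Finset.sum_congr rfl fun m _ => by ring
      _ = ∑ m, ∑ l', Ff q Bm i l' * ginv l' m * g m l := Finset.sum_comm
      _ = ∑ m, (∑ l', Ff q Bm i l' * ginv l' m) * g m l := by
          exact Finset.sum_congr rfl fun m _ => by rw [Finset.sum_mul]
  -- Sterm manipulations
  have hSterm1 : (∑ i, ∑ l, Ff q Bm i l * DYup i l)
      = ∑ i, ∑ m : Fin n, (∑ l, Ff q Bm i l * ginv l m) * ∑ l, g m l * DYup i l := by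
    refine Finset.sum_congr rfl fun i _ => ?_
    calc ∑ l, Ff q Bm i l * DYup i l
        = ∑ l, (∑ m, (∑ l', Ff q Bm i l' * ginv l' m) * g m l) * DYup i l := by
          exact Finset.sum_congr rfl fun l _ => by rw [← hFH i l]
      _ = ∑ l, ∑ m, (∑ l', Ff q Bm i l' * ginv l' m) * g m l * DYup i l := by
          exact Finset.sum_congr rfl fun l _ => by rw [Finset.sum_mul]
      _ = ∑ m, ∑ l, (∑ l', Ff q Bm i l' * ginv l' m) * g m l * DYup i l := Finset.sum_comm
      _ = ∑ m, (∑ l', Ff q Bm i l' * ginv l' m) * ∑ l, g m l * DYup i l := by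
          refine Finset.sum_congr rfl fun m _ => ?_
          rw [Finset.mul_sum]
          exact Finset.sum_congr rfl fun l _ => by ring
  have hSterm2 : (∑ i, ∑ l, Ff q Bm i l * DYup i l)
      = ∑ i, ∑ m : Fin n, (∑ l, Ff q Bm i l * ginv l m) * ∑ l, g i l * DYup m l := by
    rw [hSterm1]
    calc ∑ i, ∑ m : Fin n, (∑ l, Ff q Bm i l * ginv l m) * ∑ l, g m l * DYup i l
        = ∑ i, ∑ m : Fin n, (∑ l, Ff q Bm m l * ginv l i) * ∑ l, g m l * DYup i l := by
          exact Finset.sum_congr rfl fun i _ => Finset.sum_congr rfl fun m _ => by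
            rw [hHsym i m]
      _ = ∑ m, ∑ i : Fin n, (∑ l, Ff q Bm m l * ginv l i) * ∑ l, g m l * DYup i l :=
          Finset.sum_comm
  have hcomb : 2 * (∑ i, ∑ l, Ff q Bm i l * DYup i l)
      = ∑ i, ∑ m : Fin n, (∑ l, Ff q Bm i l * ginv l m) *
          (2 * g i m + 2 * ⟪Blow i m, Zbar⟫) := by
    calc 2 * (∑ i, ∑ l, Ff q Bm i l * DYup i l)
        = (∑ i, ∑ m : Fin n, (∑ l, Ff q Bm i l * ginv l m) * ∑ l, g m l * DYup i l)
          + ∑ i, ∑ m : Fin n, (∑ l, Ff q Bm i l * ginv l m) * ∑ l, g i l * DYup m l := by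
          rw [← hSterm1, ← hSterm2]
          ring
      _ = ∑ i, ∑ m : Fin n, (∑ l, Ff q Bm i l * ginv l m) *
            ((∑ l, g m l * DYup i l) + ∑ l, g i l * DYup m l) := by
          rw [← Finset.sum_add_distrib]
          refine Finset.sum_congr rfl fun i _ => ?_
          rw [← Finset.sum_add_distrib]
          exact Finset.sum_congr rfl fun m _ => by rw [mul_add]
      _ = ∑ i, ∑ m : Fin n, (∑ l, Ff q Bm i l * ginv l m) *
            (2 * g i m + 2 * ⟪Blow i m, Zbar⟫) := by
          exact Finset.sum_congr rfl fun i _ => Finset.sum_congr rfl fun m _ => by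
            rw [hLie i m]
  have hSval : (∑ i, ∑ l, Ff q Bm i l * DYup i l)
      = (∑ i, ∑ m : Fin n, (∑ l, Ff q Bm i l * ginv l m) * g i m)
        + ∑ i, ∑ m : Fin n, (∑ l, Ff q Bm i l * ginv l m) * ⟪Blow i m, Zbar⟫ := by
    have h2 : ∑ i, ∑ m : Fin n, (∑ l, Ff q Bm i l * ginv l m) *
          (2 * g i m + 2 * ⟪Blow i m, Zbar⟫)
        = 2 * ((∑ i, ∑ m : Fin n, (∑ l, Ff q Bm i l * ginv l m) * g i m)
          + ∑ i, ∑ m : Fin n, (∑ l, Ff q Bm i l * ginv l m) * ⟪Blow i m, Zbar⟫) := by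
      rw [mul_add, Finset.mul_sum, Finset.mul_sum, ← Finset.sum_add_distrib]
      refine Finset.sum_congr rfl fun i _ => ?_
      rw [Finset.mul_sum, Finset.mul_sum, ← Finset.sum_add_distrib]
      exact Finset.sum_congr rfl fun m _ => by ring
    have := hcomb
    rw [h2] at this
    linarith
  -- T1: the trace term
  have hT1 : (∑ i, ∑ m : Fin n, (∑ l, Ff q Bm i l * ginv l m) * g i m)
      = ∑ i, Ff q Bm i i := by
    refine Finset.sum_congr rfl fun i _ => ?_
    calc ∑ m : Fin n, (∑ l, Ff q Bm i l * ginv l m) * g i m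
        = ∑ m, ∑ l, Ff q Bm i l * ginv l m * g i m := by
          exact Finset.sum_congr rfl fun m _ => by rw [Finset.sum_mul]
      _ = ∑ l, ∑ m, Ff q Bm i l * ginv l m * g i m := Finset.sum_comm
      _ = ∑ l, Ff q Bm i l * ∑ m, ginv l m * g m i := by
          refine Finset.sum_congr rfl fun l _ => ?_
          rw [Finset.mul_sum]
          refine Finset.sum_congr rfl fun m _ => ?_
          rw [hgsym i m]
          ring
      _ = ∑ l, Ff q Bm i l * (if l = i then (1:ℝ) else 0) := by
          exact Finset.sum_congr rfl fun l _ => by rw [hinv']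
      _ = Ff q Bm i i := by
          simp_rw [mul_ite, mul_one, mul_zero]
          rw [Finset.sum_ite_eq' Finset.univ i]
          simp
  have hfact2q : ((2*q).factorial : ℝ) ≠ 0 := Nat.cast_ne_zero.mpr (Nat.factorial_ne_zero _)
  have hT1b : (∑ i, Ff q Bm i i)
      = ((n:ℝ) - (2*q : ℕ)) * (((2*q).factorial : ℝ) * S2q) := by
    calc ∑ i, Ff q Bm i i
        = ∑ i : Fin n, ∑ a : Fin (2*q) → Fin n, ∑ b : Fin (2*q) → Fin n,
            gkd (Fin.cons i b) (Fin.cons i a) * Xf q Bm a b := rfl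
      _ = ∑ a : Fin (2*q) → Fin n, ∑ b : Fin (2*q) → Fin n, ∑ i : Fin n,
            gkd (Fin.cons i b) (Fin.cons i a) * Xf q Bm a b := sum3_comm' _
      _ = ∑ a : Fin (2*q) → Fin n, ∑ b : Fin (2*q) → Fin n,
            ((n:ℝ) - (2*q : ℕ)) * (gkd b a * Xf q Bm a b) := by
          refine Finset.sum_congr rfl fun a _ => Finset.sum_congr rfl fun b _ => ?_
          rw [← Finset.sum_mul, gkd_trace]
          ring
      _ = ((n:ℝ) - (2*q : ℕ)) * ∑ a : Fin (2*q) → Fin n, ∑ b : Fin (2*q) → Fin n,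
            gkd b a * Xf q Bm a b := by
          rw [Finset.mul_sum]
          exact Finset.sum_congr rfl fun a _ => by rw [Finset.mul_sum]
      _ = ((n:ℝ) - (2*q : ℕ)) * (((2*q).factorial : ℝ) * S2q) := by
          rw [hS2q]
          congr 1
          rw [← mul_assoc, mul_one_div, div_self hfact2q, one_mul]
          simp only [Xf]
  -- T2: the second-fundamental-form term
  have hT2 : (∑ i, ∑ m : Fin n, (∑ l, Ff q Bm i l * ginv l m) * ⟪Blow i m, Zbar⟫)
      = ∑ i, ∑ l, Ff q Bm i l * ⟪Bm l i, Zbar⟫ := by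
    refine Finset.sum_congr rfl fun i _ => ?_
    calc ∑ m : Fin n, (∑ l, Ff q Bm i l * ginv l m) * ⟪Blow i m, Zbar⟫
        = ∑ m, ∑ l, Ff q Bm i l * ginv l m * ⟪Blow i m, Zbar⟫ := by
          exact Finset.sum_congr rfl fun m _ => by rw [Finset.sum_mul]
      _ = ∑ l, ∑ m, Ff q Bm i l * ginv l m * ⟪Blow i m, Zbar⟫ := Finset.sum_comm
      _ = ∑ l, Ff q Bm i l * ∑ m, ginv l m * ⟪Blow m i, Zbar⟫ := by
          refine Finset.sum_congr rfl fun l _ => ?_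
          rw [Finset.mul_sum]
          refine Finset.sum_congr rfl fun m _ => ?_
          rw [hBsym i m]
          ring
      _ = ∑ l, Ff q Bm i l * ⟪Bm l i, Zbar⟫ := by
          refine Finset.sum_congr rfl fun l _ => ?_
          congr 1
          rw [hBm l i, sum_inner]
          exact Finset.sum_congr rfl fun m _ => by rw [real_inner_smul_left]
  -- rotation/splitting of sums over `Fin (2q+1) → Fin n`
  have hrotW : ∀ f : (Fin (2*q+1) → Fin n) → W,
      (∑ v : Fin (2*q+1) → Fin n, f v)
        = ∑ x : Fin n, ∑ a : Fin (2*q) → Fin n,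
            f ((Fin.cons x a : Fin (2*q+1) → Fin n) ∘ ⇑(finRotate (2*q+1))) := by
    intro f
    have hEq : ∀ v : Fin (2*q+1) → Fin n,
        (Equiv.arrowCongr (finRotate (2*q+1)).symm (Equiv.refl (Fin n))) v
          = v ∘ ⇑(finRotate (2*q+1)) := by
      intro v; funext t; simp [Equiv.arrowCongr]
    rw [← Equiv.sum_comp (Equiv.arrowCongr (finRotate (2*q+1)).symm (Equiv.refl (Fin n))) f]
    simp_rw [hEq]
    exact sum_cons_split _
  have hvec : (∑ a' : Fin (2*q+1) → Fin n, ∑ b' : Fin (2*q+1) → Fin n,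
      (gkd b' a' * ∏ s : Fin q,
          ⟪Bm (a' (pr1 s).castSucc) (b' (pr1 s).castSucc),
            Bm (a' (pr2 s).castSucc) (b' (pr2 s).castSucc)⟫) •
        Bm (a' (Fin.last (2*q))) (b' (Fin.last (2*q))))
      = ∑ l : Fin n, ∑ a : Fin (2*q) → Fin n, ∑ i : Fin n, ∑ b : Fin (2*q) → Fin n,
          (gkd (Fin.cons i b) (Fin.cons l a) * Xf q Bm a b) • Bm l i := by
    rw [hrotW]
    refine Finset.sum_congr rfl fun l _ => Finset.sum_congr rfl fun a _ => ?_
    rw [hrotW]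
    refine Finset.sum_congr rfl fun i _ => Finset.sum_congr rfl fun b _ => ?_
    rw [gkd_comp (Fin.cons i b) (Fin.cons l a) (finRotate (2*q+1))]
    simp only [cons_comp_rotate, cons_comp_rotate_last, Xf]
  have hSvecZ : (∑ i, ∑ l, Ff q Bm i l * ⟪Bm l i, Zbar⟫)
      = ((2*q+1).factorial : ℝ) * ⟪Svec, Zbar⟫ := by
    have hfact : ((2*q+1).factorial : ℝ) ≠ 0 := Nat.cast_ne_zero.mpr (Nat.factorial_ne_zero _)
    rw [hSvec, real_inner_smul_left]
    rw [← mul_assoc, mul_one_div, div_self hfact, one_mul]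
    have hip : (⟪(∑ a' : Fin (2*q+1) → Fin n, ∑ b' : Fin (2*q+1) → Fin n,
        (gkd b' a' * ∏ s : Fin q,
            ⟪Bm (a' (pr1 s).castSucc) (b' (pr1 s).castSucc),
              Bm (a' (pr2 s).castSucc) (b' (pr2 s).castSucc)⟫) •
          Bm (a' (Fin.last (2*q))) (b' (Fin.last (2*q)))), Zbar⟫ : ℝ)
        = ∑ l : Fin n, ∑ a : Fin (2*q) → Fin n, ∑ i : Fin n, ∑ b : Fin (2*q) → Fin n,
            (gkd (Fin.cons i b) (Fin.cons l a) * Xf q Bm a b) * ⟪Bm l i, Zbar⟫ := by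
      rw [hvec, sum_inner]
      refine Finset.sum_congr rfl fun l _ => ?_
      rw [sum_inner]
      refine Finset.sum_congr rfl fun a _ => ?_
      rw [sum_inner]
      refine Finset.sum_congr rfl fun i _ => ?_
      rw [sum_inner]
      exact Finset.sum_congr rfl fun b _ => by rw [real_inner_smul_left]
    rw [hip]
    calc ∑ i, ∑ l, Ff q Bm i l * ⟪Bm l i, Zbar⟫
        = ∑ i, ∑ l : Fin n, ∑ a : Fin (2*q) → Fin n, ∑ b : Fin (2*q) → Fin n,
            (gkd (Fin.cons i b) (Fin.cons l a) * Xf q Bm a b) * ⟪Bm l i, Zbar⟫ := by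
          refine Finset.sum_congr rfl fun i _ => Finset.sum_congr rfl fun l _ => ?_
          rw [Ff, Finset.sum_mul]
          refine Finset.sum_congr rfl fun a _ => ?_
          rw [Finset.sum_mul]
      _ = ∑ l, ∑ i : Fin n, ∑ a : Fin (2*q) → Fin n, ∑ b : Fin (2*q) → Fin n,
            (gkd (Fin.cons i b) (Fin.cons l a) * Xf q Bm a b) * ⟪Bm l i, Zbar⟫ :=
          Finset.sum_comm
      _ = ∑ l : Fin n, ∑ a : Fin (2*q) → Fin n, ∑ i : Fin n, ∑ b : Fin (2*q) → Fin n,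
            (gkd (Fin.cons i b) (Fin.cons l a) * Xf q Bm a b) * ⟪Bm l i, Zbar⟫ := by
          exact Finset.sum_congr rfl fun l _ => Finset.sum_comm
  -- final assembly
  have hfs : ((2*q+1).factorial : ℝ) = ((2*q : ℕ) + 1) * ((2*q).factorial : ℝ) := by
    rw [Nat.factorial_succ]
    push_cast
    ring
  calc (∑ i, ∑ j, ginv i j * Dω i j)
      = -(1/2) * ∑ i, ∑ l, Ff q Bm i l * DYup i l := by rw [step1, step2]
    _ = -(1/2) * (((n:ℝ) - (2*q : ℕ)) * (((2*q).factorial : ℝ) * S2q)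
        + ((2*q+1).factorial : ℝ) * ⟪Svec, Zbar⟫) := by
        rw [hSval, hT1, hT1b, hT2, hSvecZ]
    _ = -(((2 * q).factorial : ℝ) / 2) *
          (((n : ℝ) - 2 * q) * S2q + (2 * q + 1) * ⟪Svec, Zbar⟫) := by
        rw [hfs]
        push_cast
        ring
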